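/- For 0 ≤ r < 1 and 0 < ε < 2, ∫_{{t : |e^{it} − 1| ≤ ε}} P(r, t) dt = (2/π) arctan( ((1+r)/(1−r)) · ε / (√(2−ε)·√(2+ε)) ), where P(r,t) = (1−r²)/(2π(1−2r cos t + r²)) and the integral is over t ∈ (−π, π] with |e^{it}−1| ≤ ε. -/

import Mathlib

open MeasureTheory Real Complex Set

/-- The Poisson kernel of the unit disk. -/
noncomputable def poissonKernelDisk (r t : ℝ) : ℝ :=
  (1 - r ^ 2) / (2 * π * (1 - 2 * r * Real.cos t + r ^ 2))

lemma poissonKernelDisk_continuous (r : ℝ) (hr0 : 0 ≤ r) (hr1 : r < 1) :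
    Continuous (poissonKernelDisk r) := by
  apply Continuous.div (by continuity) (by continuity)
  intro t
  have hX : 0 < 1 - 2 * r * Real.cos t + r ^ 2 := by
    nlinarith [Real.cos_le_one t, sq_nonneg (1 - r)]
  exact ne_of_gt (mul_pos (mul_pos two_pos Real.pi_pos) hX)

lemma poissonKernelDisk_hasDeriv (r : ℝ) (hr0 : 0 ≤ r) (hr1 : r < 1) (t : ℝ)
    (ht : Real.cos (t/2) ≠ 0) :
    HasDerivAt (fun u => 1/π * Real.arctan ((1+r)/(1-r) * Real.tan (u/2)))
      (poissonKernelDisk r t) t := by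
  have h1r : (1:ℝ) - r ≠ 0 := by linarith
  have hπ : π ≠ 0 := Real.pi_ne_zero
  have hden : 1 - 2 * r * Real.cos t + r ^ 2 ≠ 0 := by
    nlinarith [Real.cos_le_one t, sq_nonneg (1 - r)]
  have h1 : HasDerivAt (fun u : ℝ => u/2) (1/2) t := (hasDerivAt_id t).div_const 2
  have h2 : HasDerivAt Real.tan (1 / Real.cos (t/2) ^ 2) (t/2) := Real.hasDerivAt_tan ht
  have h3 := (h2.comp t h1).const_mul ((1+r)/(1-r))
  have h4 := (Real.hasDerivAt_arctan ((1+r)/(1-r) * Real.tan (t/2))).comp t h3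
  have h5 := h4.const_mul (1/π)
  refine h5.congr_deriv (Eq.symm ?_)
  show poissonKernelDisk r t = 1/π * (1 / (1 + ((1+r)/(1-r) * Real.tan (t/2))^2)
      * ((1+r)/(1-r) * (1 / Real.cos (t/2)^2 * (1/2))))
  have hcos : Real.cos t = 2 * Real.cos (t/2)^2 - 1 := by
    have h := Real.cos_two_mul (t/2)
    rw [show 2*(t/2) = t by ring] at h
    exact h
  have hS2 : Real.sin (t/2)^2 = 1 - Real.cos (t/2)^2 := by
    have := Real.sin_sq_add_cos_sq (t/2); linarith
  rw [poissonKernelDisk, Real.tan_eq_sin_div_cos, mul_pow, div_pow, div_pow, hS2, hcos]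
  have hden' : 1 - 2 * r * (2 * Real.cos (t/2)^2 - 1) + r ^ 2 ≠ 0 := by
    rw [← hcos]; exact hden
  have hC2 : 0 < Real.cos (t/2)^2 := by positivity
  have hSnn : 0 ≤ 1 - Real.cos (t/2)^2 := by
    rw [← hS2]; exact sq_nonneg _
  have hne : (1:ℝ) + ((1+r)/(1-r))^2 * ((1 - Real.cos (t/2)^2)/Real.cos (t/2)^2) ≠ 0 := by
    have : 0 ≤ ((1+r)/(1-r))^2 * ((1 - Real.cos (t/2)^2)/Real.cos (t/2)^2) :=
      mul_nonneg (sq_nonneg _) (div_nonneg hSnn hC2.le)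
    intro h; linarith
  field_simp [hne]
  rw [div_eq_iff (by intro h; apply hden'; linarith)]
  ring

/-- Exact value of the Poisson integral over the arc `|e^{it} - 1| ≤ ε`. -/
theorem stmt_8 (r ε : ℝ) (hr0 : 0 ≤ r) (hr1 : r < 1) (hε0 : 0 < ε) (hε2 : ε < 2) :
    ∫ t in {t ∈ Set.Ioc (-π) π |
        ‖Complex.exp (Complex.I * t) - 1‖ ≤ ε},
      poissonKernelDisk r t
      = 2 / π * Real.arctan ((1 + r) / (1 - r) * ε /
          (Real.sqrt (2 - ε) * Real.sqrt (2 + ε))) := by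
  have habs : ∀ t : ℝ, ‖Complex.exp (Complex.I * t) - 1‖
      = Real.sqrt (2 - 2 * Real.cos t) := by
    intro t
    rw [mul_comm, Complex.exp_mul_I, Complex.norm_def, Complex.normSq_apply]
    simp only [Complex.add_re, Complex.add_im, Complex.sub_re, Complex.sub_im,
      Complex.mul_re, Complex.mul_im, Complex.I_re, Complex.I_im, Complex.one_re, Complex.one_im,
      Complex.cos_ofReal_re, Complex.cos_ofReal_im, Complex.sin_ofReal_re, Complex.sin_ofReal_im]
    ring_nf
    congr 1
    nlinarith [Real.sin_sq_add_cos_sq t]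
  obtain ⟨c, hc⟩ : ∃ x : ℝ, x = 1 - ε^2/2 := ⟨_, rfl⟩
  obtain ⟨t₀, ht₀⟩ : ∃ x : ℝ, x = Real.arccos c := ⟨_, rfl⟩
  have hc1 : -1 < c := by nlinarith
  have hc2 : c < 1 := by nlinarith
  have hct₀ : Real.cos t₀ = c := by rw [ht₀]; exact Real.cos_arccos hc1.le hc2.le
  have ht₀0 : 0 ≤ t₀ := ht₀ ▸ Real.arccos_nonneg c
  have ht₀le : t₀ ≤ π := ht₀ ▸ Real.arccos_le_pi c
  have ht₀π : t₀ < π := by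
    rcases lt_or_eq_of_le ht₀le with h | h
    · exact h
    · exfalso; rw [h, Real.cos_pi] at hct₀; linarith
  -- the set is the arc [-t₀, t₀]
  have hset : {t ∈ Set.Ioc (-π) π |
      ‖Complex.exp (Complex.I * t) - 1‖ ≤ ε} = Set.Icc (-t₀) t₀ := by
    ext t
    simp only [Set.mem_setOf_eq, Set.mem_Ioc, Set.mem_Icc, habs]
    constructor
    · rintro ⟨⟨h1, h2⟩, h3⟩
      have h4 : 2 - 2 * Real.cos t ≤ ε ^ 2 := by
        have := Real.sq_sqrt (by nlinarith [Real.cos_le_one t] : (0:ℝ) ≤ 2 - 2 * Real.cos t)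
        nlinarith [Real.sqrt_nonneg (2 - 2 * Real.cos t)]
      have h5 : Real.cos t₀ ≤ Real.cos |t| := by
        rw [Real.cos_abs, hct₀]; linarith
      have h6 : |t| ≤ t₀ := by
        by_contra h
        push_neg at h
        have := Real.strictAntiOn_cos ⟨ht₀0, ht₀le⟩
          ⟨abs_nonneg t, by rw [abs_le]; constructor <;> linarith⟩ h
        rw [Real.cos_abs] at this; linarith
      rw [abs_le] at h6; exact h6
    · rintro ⟨h1, h2⟩
      have habst : |t| ≤ t₀ := abs_le.2 ⟨h1, h2⟩
      have h5 : Real.cos t₀ ≤ Real.cos t := by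
        rw [← Real.cos_abs t]
        rcases eq_or_lt_of_le habst with h | h
        · rw [h]
        · exact le_of_lt (Real.strictAntiOn_cos ⟨abs_nonneg t, by linarith⟩ ⟨ht₀0, ht₀le⟩ h)
      refine ⟨⟨by linarith [abs_le.1 habst |>.1], by linarith [abs_le.1 habst |>.2]⟩, ?_⟩
      rw [hct₀] at h5
      have : 2 - 2 * Real.cos t ≤ ε^2 := by nlinarith
      calc Real.sqrt (2 - 2 * Real.cos t) ≤ Real.sqrt (ε^2) := Real.sqrt_le_sqrt this
        _ = ε := by rw [Real.sqrt_sq hε0.le]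
  rw [hset]
  -- convert to an interval integral
  have hIcc : ∫ t in Set.Icc (-t₀) t₀, poissonKernelDisk r t
      = ∫ t in (-t₀)..t₀, poissonKernelDisk r t := by
    rw [intervalIntegral.integral_of_le (by linarith), integral_Icc_eq_integral_Ioc]
  rw [hIcc]
  -- FTC
  have hcosne : ∀ t ∈ Set.uIcc (-t₀) t₀, Real.cos (t/2) ≠ 0 := by
    intro t htm
    rw [Set.uIcc_of_le (by linarith)] at htm
    have h1 : -π/2 < t/2 := by have := htm.1; linarith
    have h2 : t/2 < π/2 := by have := htm.2; linarith
    exact ne_of_gt (Real.cos_pos_of_mem_Ioo ⟨by linarith, h2⟩)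
  have hFTC := intervalIntegral.integral_eq_sub_of_hasDerivAt
    (f := fun u => 1/π * Real.arctan ((1+r)/(1-r) * Real.tan (u/2)))
    (fun t htm => poissonKernelDisk_hasDeriv r hr0 hr1 t (hcosne t htm))
    ((poissonKernelDisk_continuous r hr0 hr1).intervalIntegrable _ _)
  rw [hFTC]
  -- evaluate
  have hodd : Real.tan (-t₀/2) = -Real.tan (t₀/2) := by
    rw [show -t₀/2 = -(t₀/2) by ring, Real.tan_neg]
  rw [hodd, mul_neg, Real.arctan_neg]
  -- tan (t₀/2) = ε / √(4 - ε²)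
  have h4ε : (0:ℝ) < 4 - ε^2 := by nlinarith
  have hsqrt4 : Real.sqrt (4 - ε^2) ≠ 0 := by positivity
  have htan : Real.tan (t₀/2) = ε / Real.sqrt (4 - ε^2) := by
    have hcoshalf : Real.cos (t₀/2) = Real.sqrt ((1 + c)/2) :=
      Real.cos_half (by linarith) ht₀le |>.trans (by rw [hct₀])
    have hsinhalf : Real.sin (t₀/2) = Real.sqrt ((1 - c)/2) := by
      rw [Real.sin_half_eq_sqrt ht₀0 (by linarith [Real.pi_pos]), hct₀]
    have h4 : Real.sqrt ((1 + c)/2) = Real.sqrt (4 - ε^2) / 2 := by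
      rw [hc, show (1 + (1 - ε^2/2))/2 = (4 - ε^2)/4 by ring,
        show ((4:ℝ) - ε^2)/4 = (4 - ε^2)/(2^2) by norm_num,
        Real.sqrt_div h4ε.le, Real.sqrt_sq (by norm_num : (0:ℝ) ≤ 2)]
    have h5 : Real.sqrt ((1 - c)/2) = ε/2 := by
      rw [hc, show (1 - (1 - ε^2/2))/2 = (ε/2)^2 by ring,
        Real.sqrt_sq (by linarith)]
    rw [Real.tan_eq_sin_div_cos, hsinhalf, hcoshalf, h4, h5]
    field_simp
  rw [htan]
  have hsq : Real.sqrt (2 - ε) * Real.sqrt (2 + ε) = Real.sqrt (4 - ε^2) := by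
    rw [← Real.sqrt_mul (by linarith : (0:ℝ) ≤ 2 - ε),
      show (2 - ε) * (2 + ε) = 4 - ε^2 by ring]
  rw [hsq, mul_div_assoc]
  ring
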